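/- For every ultimately periodic trace π there exists an LTL formula id_π that is satisfied by π and by no other trace: π ⊨ id_π, and for every trace π′, if π′ ⊨ id_π then π′ = π. -/

import Mathlib

/-- LTL formulae over a set `AP` of atomic propositions:
`⊥ | p | ¬φ | φ∨φ | Xφ | φ U φ`. -/
inductive LTLFormula (AP : Type) : Type
  | bot : LTLFormula AP
  | atom : AP → LTLFormula AP
  | neg : LTLFormula AP → LTLFormula AP
  | disj : LTLFormula AP → LTLFormula AP → LTLFormula AP
  | next : LTLFormula AP → LTLFormula AP
  | untl : LTLFormula AP → LTLFormula AP → LTLFormula AP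

/-- A trace is an infinite sequence of sets of atomic propositions. -/
abbrev Trace (AP : Type) : Type := ℕ → Set AP

/-- The suffix `π^i` of a trace. -/
def Trace.suffix {AP : Type} (π : Trace AP) (i : ℕ) : Trace AP := fun j => π (i + j)

/-- Satisfaction of an LTL formula by a trace. -/
def LTLFormula.sat {AP : Type} : LTLFormula AP → Trace AP → Prop
  | .bot, _ => False
  | .atom p, π => p ∈ π 0
  | .neg φ, π => ¬ LTLFormula.sat φ π
  | .disj φ ψ, π => LTLFormula.sat φ π ∨ LTLFormula.sat ψ π
  | .next φ, π => LTLFormula.sat φ (π.suffix 1)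
  | .untl φ ψ, π => ∃ i, LTLFormula.sat ψ (π.suffix i) ∧ ∀ j < i, LTLFormula.sat φ (π.suffix j)

/-- A Kripke structure: a finite state set (`Fin n`), a nonempty set of initial
states, a left-total transition relation, and a labeling function. -/
structure Kripke (AP : Type) where
  n : ℕ
  init : Set (Fin n)
  init_nonempty : init.Nonempty
  trans : Fin n → Fin n → Prop
  trans_total : ∀ s, ∃ s', trans s s'
  label : Fin n → Set AP

/-- The traces of a Kripke structure. -/
def Kripke.traces {AP : Type} (M : Kripke AP) : Set (Trace AP) :=
  {π | ∃ ρ : ℕ → Fin M.n, ρ 0 ∈ M.init ∧ (∀ i, M.trans (ρ i) (ρ (i + 1))) ∧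
        ∀ i, π i = M.label (ρ i)}

/-- `M ⊨ φ` : every trace of `M` satisfies `φ`. -/
def Kripke.sat {AP : Type} (M : Kripke AP) (φ : LTLFormula AP) : Prop :=
  ∀ π ∈ M.traces, φ.sat π

/-- `M ⊨ X` : `M` satisfies every formula in `X`. -/
def Kripke.satSet {AP : Type} (M : Kripke AP) (X : Set (LTLFormula AP)) : Prop :=
  ∀ φ ∈ X, M.sat φ

/-- The consequence operator of LTL: `ψ ∈ CnLTL AP X` iff every Kripke
structure satisfying all of `X` satisfies `ψ`. -/
def CnLTL (AP : Type) (X : Set (LTLFormula AP)) : Set (LTLFormula AP) :=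
  {ψ | ∀ M : Kripke AP, M.satSet X → M.sat ψ}

/-- The infinite word `ρ σ^ω` determined by a finite prefix `ρ` and a nonempty
finite period `σ`. -/
def extendPer {α : Type} (ρ σ : List α) (hσ : σ ≠ []) : ℕ → α := fun i =>
  if h : i < ρ.length then ρ.get ⟨i, h⟩
  else σ.get ⟨(i - ρ.length) % σ.length, Nat.mod_lt _ (List.length_pos_iff.mpr hσ)⟩

/-- An infinite word is ultimately periodic if it equals `ρ σ^ω` for finite
words `ρ, σ` with `σ` nonempty. -/
def UltPeriodic {α : Type} (w : ℕ → α) : Prop :=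
  ∃ (ρ σ : List α) (hσ : σ ≠ []), w = extendPer ρ σ hσ

namespace LTLAux

variable {AP : Type}

def top : LTLFormula AP := .neg .bot

def conj (φ ψ : LTLFormula AP) : LTLFormula AP := .neg (.disj (.neg φ) (.neg ψ))

def impl (φ ψ : LTLFormula AP) : LTLFormula AP := .disj (.neg φ) ψ

def always (φ : LTLFormula AP) : LTLFormula AP := .neg (.untl top (.neg φ))

def iterNext : ℕ → LTLFormula AP → LTLFormula AP
  | 0, φ => φ
  | n+1, φ => .next (iterNext n φ)

def bigConj : List (LTLFormula AP) → LTLFormula AP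
  | [] => top
  | φ :: l => conj φ (bigConj l)

lemma sat_top (π : Trace AP) : (top : LTLFormula AP).sat π := by
  simp [top, LTLFormula.sat]

lemma sat_conj {φ ψ : LTLFormula AP} {π : Trace AP} :
    (conj φ ψ).sat π ↔ φ.sat π ∧ ψ.sat π := by
  simp only [conj, LTLFormula.sat, not_or, not_not]

lemma sat_impl {φ ψ : LTLFormula AP} {π : Trace AP} :
    (impl φ ψ).sat π ↔ (φ.sat π → ψ.sat π) := by
  simp only [impl, LTLFormula.sat]; tauto

lemma suffix_suffix (π : Trace AP) (a b : ℕ) :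
    (π.suffix a).suffix b = π.suffix (a + b) := by
  funext j; simp [Trace.suffix, Nat.add_assoc]

lemma sat_always {φ : LTLFormula AP} {π : Trace AP} :
    (always φ).sat π ↔ ∀ i, φ.sat (π.suffix i) := by
  simp only [always, LTLFormula.sat]
  constructor
  · intro h i
    by_contra hc
    exact h ⟨i, hc, fun j _ => not_false⟩
  · rintro h ⟨i, hi, -⟩
    exact hi (h i)

lemma sat_iterNext {φ : LTLFormula AP} {π : Trace AP} {n : ℕ} :
    (iterNext n φ).sat π ↔ φ.sat (π.suffix n) := by
  induction n generalizing π with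
  | zero =>
    have : π.suffix 0 = π := by funext j; simp [Trace.suffix]
    rw [iterNext, this]
  | succ n ih =>
    show (iterNext n φ).sat (π.suffix 1) ↔ _
    rw [ih, suffix_suffix, Nat.add_comm]

lemma sat_bigConj {l : List (LTLFormula AP)} {π : Trace AP} :
    (bigConj l).sat π ↔ ∀ φ ∈ l, φ.sat π := by
  induction l with
  | nil => simpa [bigConj] using sat_top π
  | cons φ l ih => simp [bigConj, sat_conj, ih]

open Classical in
noncomputable def charF [Fintype AP] (s : Set AP) : LTLFormula AP :=
  bigConj (Finset.univ.toList.map fun p => if p ∈ s then .atom p else .neg (.atom p))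

lemma sat_charF [Fintype AP] {s : Set AP} {π : Trace AP} :
    (charF s).sat π ↔ π 0 = s := by
  classical
  rw [charF, sat_bigConj]
  constructor
  · intro h
    ext p
    have := h _ (List.mem_map.mpr ⟨p, by simp, rfl⟩)
    by_cases hp : p ∈ s <;> simp [hp, LTLFormula.sat] at this <;> simp [hp, this]
  · rintro rfl φ hφ
    obtain ⟨p, -, rfl⟩ := List.mem_map.mp hφ
    by_cases hp : p ∈ π 0 <;> simp [hp, LTLFormula.sat]

noncomputable def descr [Fintype AP] (g : ℕ → Set AP) (k : ℕ) : LTLFormula AP :=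
  bigConj ((List.range k).map fun i => iterNext i (charF (g i)))

lemma sat_descr [Fintype AP] {g : ℕ → Set AP} {k : ℕ} {π : Trace AP} :
    (descr g k).sat π ↔ ∀ i < k, π i = g i := by
  rw [descr, sat_bigConj]
  constructor
  · intro h i hi
    have := h _ (List.mem_map.mpr ⟨i, List.mem_range.mpr hi, rfl⟩)
    rw [sat_iterNext, sat_charF] at this
    simpa [Trace.suffix] using this
  · rintro h φ hφ
    obtain ⟨i, hi, rfl⟩ := List.mem_map.mp hφ
    rw [sat_iterNext, sat_charF]
    simpa [Trace.suffix] using h i (List.mem_range.mp hi)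

end LTLAux

/-- every ultimately periodic trace `π` has an identifying LTL
formula, satisfied by `π` and by no other trace. -/
theorem exists_identifying_formula (AP : Type) [Fintype AP] [Nonempty AP]
    (π : Trace AP) (hπ : UltPeriodic π) :
    ∃ idf : LTLFormula AP, idf.sat π ∧ ∀ π' : Trace AP, idf.sat π' → π' = π := by
  classical
  obtain ⟨ρ, σ, hσ, hpi⟩ := hπ
  set m := ρ.length with hm
  set k := σ.length with hk
  have kpos : 0 < k := List.length_pos_iff.mpr hσ
  have hE : ∀ j, π (m + j) = σ.get ⟨j % k, Nat.mod_lt _ kpos⟩ := by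
    intro j
    rw [hpi]
    simp only [extendPer]
    rw [dif_neg (by omega)]
    have e : m + j - ρ.length = j := by simp [hm]
    congr 2
    rw [e]
  have hper : ∀ j, π (m + (j + k)) = π (m + j) := by
    intro j
    rw [hE, hE]
    congr 2
    exact Nat.add_mod_right j k
  set θ : LTLFormula AP := LTLAux.descr (π.suffix m) k with hθ
  refine ⟨LTLAux.conj (LTLAux.descr π m)
      (LTLAux.iterNext m (LTLAux.conj θ
        (LTLAux.always (LTLAux.impl θ (LTLAux.iterNext k θ))))), ?_, ?_⟩
  · rw [LTLAux.sat_conj, LTLAux.sat_iterNext, LTLAux.sat_conj, LTLAux.sat_always]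
    refine ⟨LTLAux.sat_descr.mpr fun i _ => rfl, ?_, fun q => ?_⟩
    · rw [hθ, LTLAux.sat_descr]; exact fun i _ => rfl
    · rw [LTLAux.sat_impl, LTLAux.sat_iterNext]
      simp only [LTLAux.suffix_suffix, hθ, LTLAux.sat_descr, Trace.suffix]
      intro h i hi
      have e1 : m + q + k + i = m + (q + i + k) := by ring
      have e2 : m + (q + i) = m + q + i := by ring
      rw [e1, hper (q + i), e2, h i hi]
  · intro π' hsat
    rw [LTLAux.sat_conj, LTLAux.sat_iterNext, LTLAux.sat_conj, LTLAux.sat_always] at hsat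
    obtain ⟨h1, h2, h3⟩ := hsat
    rw [LTLAux.sat_descr] at h1
    rw [hθ, LTLAux.sat_descr] at h2
    have key : ∀ q, ∀ i < k, π' (m + q * k + i) = π (m + i) := by
      intro q
      induction q with
      | zero =>
        intro i hi
        have := h2 i hi
        simpa [Trace.suffix] using this
      | succ q ih =>
        have hstep := h3 (q * k)
        rw [LTLAux.sat_impl, LTLAux.sat_iterNext] at hstep
        simp only [LTLAux.suffix_suffix, hθ, LTLAux.sat_descr, Trace.suffix] at hstep
        intro i hi
        have e : m + (q + 1) * k + i = m + q * k + k + i := by ring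
        rw [e]
        exact hstep ih i hi
    funext n
    rcases lt_or_ge n m with hn | hn
    · exact h1 n hn
    · obtain ⟨j, rfl⟩ : ∃ j, n = m + j := ⟨n - m, by omega⟩
      have hr : j % k < k := Nat.mod_lt _ kpos
      have e : m + j = m + j / k * k + j % k := by
        conv_lhs => rw [← Nat.div_add_mod j k]
        ring
      rw [e, key (j / k) (j % k) hr]
      have e2 : m + j / k * k + j % k = m + (j / k * k + j % k) := by ring
      rw [e2, hE, hE]
      congr 2
      rw [Nat.add_comm (j / k * k) (j % k), Nat.add_mul_mod_self_right]
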